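/- There exists a constant C > 0 such that for all t > 0 and all x, y ∈ D with x ≠ y: (t ∧ |x−y|^α) · ∫ from t^{1/α}∧(ε₁|x−y|/2) to ε₁|x−y| of A_{Φ₁,Φ₂,ℓ}(t,x,x+u𝐧_x)·A_{Φ₁,Φ₂,ℓ}(t,x+u𝐧_x,y)·u^{−α−1} du ≥ C·A_{Φ₁,Φ₂,ℓ}(t,x,y). -/

import Mathlib

open Set Metric MeasureTheory Real Filter Topology

noncomputable section
set_option maxHeartbeats 1000000

/-- `f` satisfies the lower scaling condition at zero with index `b`. -/
def HasLowerScaling (f : ℝ → ℝ) (b : ℝ) : Prop :=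
  ∃ C : ℝ, 1 ≤ C ∧ ∀ s r : ℝ, 0 < s → s ≤ r → r ≤ 1 → C⁻¹ * (r / s) ^ b ≤ f r / f s

/-- `f` satisfies the upper scaling condition at zero with index `b`. -/
def HasUpperScaling (f : ℝ → ℝ) (b : ℝ) : Prop :=
  ∃ C : ℝ, 1 ≤ C ∧ ∀ s r : ℝ, 0 < s → s ≤ r → r ≤ 1 → f r / f s ≤ C * (r / s) ^ b

/-- The lower Matuszewska index of `f` at zero equals `β`,
i.e. `β` is the supremum of the indices for which the lower scaling condition holds. -/
def LowerIndexIs (f : ℝ → ℝ) (β : ℝ) : Prop :=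
  (∀ b : ℝ, b < β → HasLowerScaling f b) ∧ (∀ b : ℝ, β < b → ¬ HasLowerScaling f b)

/-- The upper Matuszewska index of `f` at zero equals `β`,
i.e. `β` is the infimum of the indices for which the upper scaling condition holds. -/
def UpperIndexIs (f : ℝ → ℝ) (β : ℝ) : Prop :=
  (∀ b : ℝ, β < b → HasUpperScaling f b) ∧ (∀ b : ℝ, b < β → ¬ HasUpperScaling f b)

/-- `f` is almost increasing on `(0,1]`. -/
def AlmostIncreasingOn01 (f : ℝ → ℝ) : Prop :=
  ∃ C : ℝ, 1 ≤ C ∧ ∀ s r : ℝ, 0 < s → s ≤ r → r ≤ 1 → f s ≤ C * f r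

/-- `f` is almost decreasing on `(0,1]`. -/
def AlmostDecreasingOn01 (f : ℝ → ℝ) : Prop :=
  ∃ C : ℝ, 1 ≤ C ∧ ∀ s r : ℝ, 0 < s → s ≤ r → r ≤ 1 → f r ≤ C * f s

/-- A positive Borel function on `(0,∞)`, equal to `1` on `[1,∞)`. -/
def StdFun (f : ℝ → ℝ) : Prop :=
  Measurable f ∧ (∀ r : ℝ, 0 < r → 0 < f r) ∧ (∀ r : ℝ, 1 ≤ r → f r = 1)

/-- The scaling condition for the slowly varying factor `ℓ`, with parameters `β₁, β₂`. -/
def EllScaling (l : ℝ → ℝ) (β₁ β₂ : ℝ) : Prop :=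
  ∀ ε : ℝ, 0 < ε → ∃ C : ℝ, 1 ≤ C ∧ ∀ s r : ℝ, 0 < s → s ≤ r → r ≤ 1 →
    C⁻¹ * (r / s) ^ (-(min ε β₁)) ≤ l r / l s ∧ l r / l s ≤ C * (r / s) ^ (min ε β₂)

/-- `l` has both Matuszewska indices at zero equal to `0`. -/
def SlowlyVaryingScaling (l : ℝ → ℝ) : Prop :=
  ∀ ε : ℝ, 0 < ε → ∃ C : ℝ, 1 ≤ C ∧ ∀ s r : ℝ, 0 < s → s ≤ r → r ≤ 1 →
    C⁻¹ * (r / s) ^ (-ε) ≤ l r / l s ∧ l r / l s ≤ C * (r / s) ^ ε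

/-- The distance to the boundary of `D`. -/
def dd {d : ℕ} (D : Set (EuclideanSpace ℝ (Fin d))) (x : EuclideanSpace ℝ (Fin d)) : ℝ :=
  Metric.infDist x (frontier D)

/-- The function `A_{f,g,h}(t,x,y)`. -/
def Afun {d : ℕ} (α : ℝ) (D : Set (EuclideanSpace ℝ (Fin d))) (f g h : ℝ → ℝ)
    (t : ℝ) (x y : EuclideanSpace ℝ (Fin d)) : ℝ :=
  f (max (min (dd D x) (dd D y)) (t ^ (1 / α)) / dist x y) *
  g (max (max (dd D x) (dd D y)) (t ^ (1 / α)) / dist x y) *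
  h (max (min (dd D x) (dd D y)) (t ^ (1 / α)) /
      min (max (max (dd D x) (dd D y)) (t ^ (1 / α))) (dist x y))

/-- The inward unit vector `𝐧ₓ = (x - Qₓ)/δ_D(x)`. -/
def nv {d : ℕ} (D : Set (EuclideanSpace ℝ (Fin d)))
    (Q : EuclideanSpace ℝ (Fin d) → EuclideanSpace ℝ (Fin d))
    (x : EuclideanSpace ℝ (Fin d)) : EuclideanSpace ℝ (Fin d) :=
  (dd D x)⁻¹ • (x - Q x)

/-- `∫_a^b A_{f,g,h}(t,x,x+u𝐧ₓ) A_{f,g,h}(t,x+u𝐧ₓ,y) u^{-α-1} du`. -/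
def Iint {d : ℕ} (α : ℝ) (D : Set (EuclideanSpace ℝ (Fin d)))
    (Q : EuclideanSpace ℝ (Fin d) → EuclideanSpace ℝ (Fin d))
    (f g h : ℝ → ℝ) (a b t : ℝ) (x y : EuclideanSpace ℝ (Fin d)) : ℝ :=
  ∫ u in Set.Ioo a b,
    Afun α D f g h t x (x + u • nv D Q x) * Afun α D f g h t (x + u • nv D Q x) y *
      u ^ (-α - 1)

/-- `∫_a^b f₀(k₂/u) f₂(u/rr) l(k₁/u) u^{-α-1} du`. -/
def Jint (α : ℝ) (f₀ f₂ l : ℝ → ℝ) (a b rr k₁ k₂ : ℝ) : ℝ :=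
  ∫ u in Set.Ioo a b, f₀ (k₂ / u) * f₂ (u / rr) * l (k₁ / u) * u ^ (-α - 1)

namespace St4Aux

/-- Two-sided scaling package on (0,1]. -/
def Pkg (f : ℝ → ℝ) (C₀ b : ℝ) : Prop :=
  ∀ s r : ℝ, 0 < s → s ≤ r → r ≤ 1 →
    f r ≤ C₀ * (r / s) ^ b * f s ∧ f s ≤ C₀ * (r / s) ^ b * f r

lemma pkgComp {f : ℝ → ℝ} (hpos : ∀ v, 0 < v → 0 < f v) (h1 : ∀ v, 1 ≤ v → f v = 1)
    {C₀ b : ℝ} (hC₀ : 1 ≤ C₀) (hb : 0 ≤ b) (hsc : Pkg f C₀ b)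
    {lam : ℝ} (hlam : 1 ≤ lam) {v w : ℝ} (hv : 0 < v) (hw : 0 < w)
    (hwv : w ≤ lam * v) (hvw : v ≤ lam * w) :
    f v ≤ (C₀ * lam ^ b) * f w := by
  have hlam0 : (0:ℝ) < lam := lt_of_lt_of_le one_pos hlam
  have hlb : 1 ≤ lam ^ b := Real.one_le_rpow hlam hb
  have hlbpos : 0 < lam ^ b := lt_of_lt_of_le one_pos hlb
  have hfw := hpos w hw
  rcases le_or_gt v 1 with hv1 | hv1 <;> rcases le_or_gt w 1 with hw1 | hw1
  · -- v ≤ 1, w ≤ 1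
    rcases le_total v w with hvw' | hwv'
    · have h := (hsc v w hv hvw' hw1).2
      have hq : (w / v) ^ b ≤ lam ^ b :=
        Real.rpow_le_rpow (by positivity) ((div_le_iff₀ hv).2 hwv) hb
      calc f v ≤ C₀ * (w / v) ^ b * f w := h
        _ ≤ C₀ * lam ^ b * f w := by
            apply mul_le_mul_of_nonneg_right _ hfw.le
            exact mul_le_mul_of_nonneg_left hq (by linarith)
    · have h := (hsc w v hw hwv' hv1).1
      have hq : (v / w) ^ b ≤ lam ^ b :=
        Real.rpow_le_rpow (by positivity) ((div_le_iff₀ hw).2 hvw) hb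
      calc f v ≤ C₀ * (v / w) ^ b * f w := h
        _ ≤ C₀ * lam ^ b * f w := by
            apply mul_le_mul_of_nonneg_right _ hfw.le
            exact mul_le_mul_of_nonneg_left hq (by linarith)
  · -- v ≤ 1 < w
    have h := (hsc v 1 hv hv1 le_rfl).2
    have hf1 : f 1 = 1 := h1 1 le_rfl
    have hvlam : 1 / v ≤ lam := by
      rw [div_le_iff₀ hv]; nlinarith
    have hq : (1 / v) ^ b ≤ lam ^ b := Real.rpow_le_rpow (by positivity) hvlam hb
    have hfw1 : f w = 1 := h1 w hw1.le
    rw [hfw1]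
    calc f v ≤ C₀ * (1 / v) ^ b * f 1 := h
      _ = C₀ * (1 / v) ^ b := by rw [hf1, mul_one]
      _ ≤ C₀ * lam ^ b := mul_le_mul_of_nonneg_left hq (by linarith)
      _ = C₀ * lam ^ b * 1 := (mul_one _).symm
  · -- w ≤ 1 < v
    have h := (hsc w 1 hw hw1 le_rfl).1
    have hf1 : f 1 = 1 := h1 1 le_rfl
    have hwlam : 1 / w ≤ lam := by
      rw [div_le_iff₀ hw]; nlinarith
    have hq : (1 / w) ^ b ≤ lam ^ b := Real.rpow_le_rpow (by positivity) hwlam hb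
    have hfv1 : f v = 1 := h1 v hv1.le
    rw [hfv1]
    calc (1:ℝ) = f 1 := hf1.symm
      _ ≤ C₀ * (1 / w) ^ b * f w := h
      _ ≤ C₀ * lam ^ b * f w := by
          apply mul_le_mul_of_nonneg_right _ hfw.le
          exact mul_le_mul_of_nonneg_left hq (by linarith)
  · rw [h1 v hv1.le, h1 w hw1.le]; nlinarith

lemma pkgLB {f : ℝ → ℝ} (hpos : ∀ v, 0 < v → 0 < f v) (h1 : ∀ v, 1 ≤ v → f v = 1)
    {C₀ b : ℝ} (hC₀ : 1 ≤ C₀) (hb : 0 ≤ b) (hsc : Pkg f C₀ b)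
    {v : ℝ} (hv : 1 / 2 ≤ v) : 1 ≤ (C₀ * 2 ^ b) * f v := by
  have h2b : 1 ≤ (2:ℝ) ^ b := Real.one_le_rpow one_le_two hb
  have hv0 : (0:ℝ) < v := lt_of_lt_of_le (by norm_num) hv
  rcases le_or_gt 1 v with hv1 | hv1
  · rw [h1 v hv1]; nlinarith
  · have h := (hsc v 1 hv0 hv1.le le_rfl).1
    have hf1 : f 1 = 1 := h1 1 le_rfl
    have hq : (1 / v) ^ b ≤ 2 ^ b :=
      Real.rpow_le_rpow (by positivity) (by rw [div_le_iff₀ hv0]; linarith) hb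
    have hfv := hpos v hv0
    calc (1:ℝ) = f 1 := hf1.symm
      _ ≤ C₀ * (1 / v) ^ b * f v := h
      _ ≤ C₀ * 2 ^ b * f v := by
          apply mul_le_mul_of_nonneg_right _ hfv.le
          exact mul_le_mul_of_nonneg_left hq (by linarith)

lemma pkgUB {f : ℝ → ℝ} (hpos : ∀ v, 0 < v → 0 < f v) (h1 : ∀ v, 1 ≤ v → f v = 1)
    {C₀ b : ℝ} (hC₀ : 1 ≤ C₀) (hb : 0 ≤ b) (hsc : Pkg f C₀ b)
    {ε : ℝ} (hε0 : 0 < ε) (hε1 : ε ≤ 1) {v : ℝ} (hv : ε ≤ v) :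
    f v ≤ C₀ * (1 / ε) ^ b := by
  have hεb : 1 ≤ (1 / ε) ^ b :=
    Real.one_le_rpow (by rw [le_div_iff₀ hε0]; linarith) hb
  have hv0 : 0 < v := lt_of_lt_of_le hε0 hv
  rcases le_or_gt 1 v with hv1 | hv1
  · rw [h1 v hv1]; nlinarith
  · have h := (hsc v 1 hv0 hv1.le le_rfl).2
    have hf1 : f 1 = 1 := h1 1 le_rfl
    have hq : (1 / v) ^ b ≤ (1 / ε) ^ b :=
      Real.rpow_le_rpow (by positivity) (by
        rw [div_le_div_iff₀ hv0 hε0]; nlinarith) hb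
    calc f v ≤ C₀ * (1 / v) ^ b * f 1 := h
      _ = C₀ * (1 / v) ^ b := by rw [hf1, mul_one]
      _ ≤ C₀ * (1 / ε) ^ b := mul_le_mul_of_nonneg_left hq (by linarith)

lemma pkg_of_std {f : ℝ → ℝ} (hpos : ∀ v, 0 < v → 0 < f v)
    (hinc : ∃ C : ℝ, 1 ≤ C ∧ ∀ s r : ℝ, 0 < s → s ≤ r → r ≤ 1 → f s ≤ C * f r)
    {b : ℝ} (hb : 0 ≤ b)
    (hup : ∃ C : ℝ, 1 ≤ C ∧ ∀ s r : ℝ, 0 < s → s ≤ r → r ≤ 1 → f r / f s ≤ C * (r / s) ^ b) :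
    ∃ C₀ : ℝ, 1 ≤ C₀ ∧ Pkg f C₀ b := by
  obtain ⟨Cu, hCu1, hCu⟩ := hup
  obtain ⟨Ci, hCi1, hCi⟩ := hinc
  refine ⟨Cu * Ci, by nlinarith, fun s r hs hsr hr1 => ?_⟩
  have hr0 : 0 < r := lt_of_lt_of_le hs hsr
  have hfs := hpos s hs
  have hfr := hpos r hr0
  have hrs1 : 1 ≤ r / s := (one_le_div hs).2 hsr
  have hrsb : 1 ≤ (r / s) ^ b := Real.one_le_rpow hrs1 hb
  have key : 1 ≤ Cu * (r / s) ^ b := by nlinarith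
  constructor
  · have h := hCu s r hs hsr hr1
    rw [div_le_iff₀ hfs] at h
    calc f r ≤ Cu * (r / s) ^ b * f s := h
      _ ≤ Cu * Ci * (r / s) ^ b * f s := by nlinarith [mul_pos hfs (lt_of_lt_of_le one_pos hrsb)]
  · have h := hCi s r hs hsr hr1
    have h2 := mul_le_mul_of_nonneg_left key (by positivity : (0:ℝ) ≤ Ci * f r)
    calc f s ≤ Ci * f r := h
      _ ≤ Cu * Ci * (r / s) ^ b * f r := by nlinarith


lemma pkg_of_ell {C : ℝ} (hpos : ∀ v, 0 < v → 0 < f v) {β₁ β₂ : ℝ} (hC : 1 ≤ C)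
    (hsc : ∀ s r : ℝ, 0 < s → s ≤ r → r ≤ 1 →
      C⁻¹ * (r / s) ^ (-(min 1 β₁)) ≤ f r / f s ∧ f r / f s ≤ C * (r / s) ^ (min 1 β₂))
    (hβ₁ : 0 ≤ β₁) (hβ₂ : 0 ≤ β₂) : Pkg f C 1 := by
  intro s r hs hsr hr1
  have hr0 : 0 < r := lt_of_lt_of_le hs hsr
  have hfs := hpos s hs
  have hfr := hpos r hr0
  have hrs1 : (1:ℝ) ≤ r / s := (one_le_div hs).2 hsr
  have hrs0 : (0:ℝ) < r / s := by positivity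
  obtain ⟨hlow, hup⟩ := hsc s r hs hsr hr1
  constructor
  · have h2 : (r / s) ^ (min 1 β₂) ≤ (r / s) ^ (1:ℝ) :=
      Real.rpow_le_rpow_of_exponent_le hrs1 (min_le_left _ _)
    rw [div_le_iff₀ hfs] at hup
    calc f r ≤ C * (r / s) ^ (min 1 β₂) * f s := hup
      _ ≤ C * (r / s) ^ (1:ℝ) * f s := by
          nlinarith [mul_le_mul_of_nonneg_right (mul_le_mul_of_nonneg_left h2
            (by linarith : (0:ℝ) ≤ C)) hfs.le]
  · set p := min 1 β₁ with hp
    have hp0 : 0 ≤ p := le_min one_pos.le hβ₁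
    have hX0 : (0:ℝ) < (r / s) ^ p := Real.rpow_pos_of_pos hrs0 _
    have hXle : (r / s) ^ p ≤ (r / s) ^ (1:ℝ) :=
      Real.rpow_le_rpow_of_exponent_le hrs1 (min_le_left _ _)
    have hneg : (r / s) ^ (-p) = ((r / s) ^ p)⁻¹ := Real.rpow_neg hrs0.le _
    rw [hneg, le_div_iff₀ hfs] at hlow
    -- hlow : C⁻¹ * ((r/s)^p)⁻¹ * f s ≤ f r
    have hC0 : (0:ℝ) < C := lt_of_lt_of_le one_pos hC
    have h3 : f s ≤ C * (r / s) ^ p * f r := by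
      have := mul_le_mul_of_nonneg_left hlow (by positivity : (0:ℝ) ≤ C * (r / s) ^ p)
      calc f s = C * (r / s) ^ p * (C⁻¹ * ((r / s) ^ p)⁻¹ * f s) := by
            field_simp
        _ ≤ C * (r / s) ^ p * f r := this
    calc f s ≤ C * (r / s) ^ p * f r := h3
      _ ≤ C * (r / s) ^ (1:ℝ) * f r := by
          nlinarith [mul_le_mul_of_nonneg_right (mul_le_mul_of_nonneg_left hXle
            (by linarith : (0:ℝ) ≤ C)) hfr.le]

lemma A_lower {f g h : ℝ → ℝ} {Cf bf Cg bg Ch bh : ℝ}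
    (hfpos : ∀ v, 0 < v → 0 < f v) (hf1 : ∀ v, 1 ≤ v → f v = 1)
    (hCf : 1 ≤ Cf) (hbf : 0 ≤ bf) (hfsc : Pkg f Cf bf)
    (hgpos : ∀ v, 0 < v → 0 < g v) (hg1 : ∀ v, 1 ≤ v → g v = 1)
    (hCg : 1 ≤ Cg) (hbg : 0 ≤ bg) (hgsc : Pkg g Cg bg)
    (hhpos : ∀ v, 0 < v → 0 < h v) (hh1 : ∀ v, 1 ≤ v → h v = 1)
    (hCh : 1 ≤ Ch) (hbh : 0 ≤ bh) (hhsc : Pkg h Ch bh)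
    {s u δ₁ δ₂ : ℝ} (hs : 0 < s) (hu : 0 < u) (hu2s : u ≤ 2 * s)
    (hδ₁ : 0 ≤ δ₁) (hδ₂ : 0 ≤ δ₂) :
    ((Cf * 2 ^ bf) * (Cg * 2 ^ bg) * (Ch * 2 ^ bh))⁻¹ ≤
      f (max (min δ₁ δ₂) s / u) * g (max (max δ₁ δ₂) s / u) *
        h (max (min δ₁ δ₂) s / min (max (max δ₁ δ₂) s) u) := by
  have hm : s ≤ max (min δ₁ δ₂) s := le_max_right _ _
  have hM : s ≤ max (max δ₁ δ₂) s := le_max_right _ _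
  have hmin0 : 0 < min (max (max δ₁ δ₂) s) u := lt_min (lt_of_lt_of_le hs hM) hu
  have hv₁ : 1 / 2 ≤ max (min δ₁ δ₂) s / u := by
    rw [le_div_iff₀ hu]; linarith
  have hv₂ : 1 / 2 ≤ max (max δ₁ δ₂) s / u := by
    rw [le_div_iff₀ hu]; linarith
  have hv₃ : 1 / 2 ≤ max (min δ₁ δ₂) s / min (max (max δ₁ δ₂) s) u := by
    rw [le_div_iff₀ hmin0]
    have := min_le_right (max (max δ₁ δ₂) s) u
    linarith
  have e1 := pkgLB hfpos hf1 hCf hbf hfsc hv₁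
  have e2 := pkgLB hgpos hg1 hCg hbg hgsc hv₂
  have e3 := pkgLB hhpos hh1 hCh hbh hhsc hv₃
  have p1 : 0 < f (max (min δ₁ δ₂) s / u) := hfpos _ (by positivity)
  have p2 : 0 < g (max (max δ₁ δ₂) s / u) := hgpos _ (by positivity)
  have p3 : 0 < h (max (min δ₁ δ₂) s / min (max (max δ₁ δ₂) s) u) := hhpos _ (by positivity)
  have hX1 : (0:ℝ) < Cf * 2 ^ bf := by positivity
  have hX2 : (0:ℝ) < Cg * 2 ^ bg := by positivity
  have hX3 : (0:ℝ) < Ch * 2 ^ bh := by positivity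
  have key : 1 ≤ ((Cf * 2 ^ bf) * (Cg * 2 ^ bg) * (Ch * 2 ^ bh)) *
      (f (max (min δ₁ δ₂) s / u) * g (max (max δ₁ δ₂) s / u) *
        h (max (min δ₁ δ₂) s / min (max (max δ₁ δ₂) s) u)) := by
    have h12 : (1:ℝ) * 1 ≤ ((Cf * 2 ^ bf) * f _) * ((Cg * 2 ^ bg) * g _) :=
      mul_le_mul e1 e2 one_pos.le (by positivity)
    rw [one_mul] at h12
    have h123 : (1:ℝ) * 1 ≤ (((Cf * 2 ^ bf) * f _) * ((Cg * 2 ^ bg) * g _)) *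
        ((Ch * 2 ^ bh) * h _) := mul_le_mul h12 e3 one_pos.le (by positivity)
    rw [one_mul] at h123
    calc (1:ℝ) ≤ _ := h123
      _ = _ := by ring
  have hXpos : (0:ℝ) < (Cf * 2 ^ bf) * (Cg * 2 ^ bg) * (Ch * 2 ^ bh) := by positivity
  rw [inv_le_iff_one_le_mul₀ hXpos]
  linarith [key]


lemma A_comp_core {f g h : ℝ → ℝ} {Cf bf Cg bg Ch bh : ℝ}
    (hfpos : ∀ v, 0 < v → 0 < f v) (hf1 : ∀ v, 1 ≤ v → f v = 1)
    (hCf : 1 ≤ Cf) (hbf : 0 ≤ bf) (hfsc : Pkg f Cf bf)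
    (hgpos : ∀ v, 0 < v → 0 < g v) (hg1 : ∀ v, 1 ≤ v → g v = 1)
    (hCg : 1 ≤ Cg) (hbg : 0 ≤ bg) (hgsc : Pkg g Cg bg)
    (hhpos : ∀ v, 0 < v → 0 < h v) (hh1 : ∀ v, 1 ≤ v → h v = 1)
    (hCh : 1 ≤ Ch) (hbh : 0 ≤ bh) (hhsc : Pkg h Ch bh)
    {e m M m' M' r p : ℝ}
    (he0 : 0 < e) (he1 : e ≤ 1) (hm0 : 0 < m) (hM0 : 0 < M)
    (hm'0 : 0 < m') (hM'0 : 0 < M') (hr : 0 < r) (hp0 : 0 < p)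
    (hm'l : e * m ≤ m') (hm'u : m' ≤ 3 * m)
    (hM'l : e * M ≤ M') (hM'u : M' ≤ 3 * M)
    (hpl : 3 / 4 * r ≤ p) (hpu : p ≤ 5 / 4 * r) :
    f (m / r) * g (M / r) * h (m / min M r) ≤
      ((Cf * (4 / e) ^ bf) * (Cg * (4 / e) ^ bg) * (Ch * (4 / e) ^ bh)) *
        (f (m' / p) * g (M' / p) * h (m' / min M' p)) := by
  have hlam : 1 ≤ 4 / e := by rw [le_div_iff₀ he0]; linarith
  have hdm0 : 0 < min M r := lt_min hM0 hr
  have hdm'0 : 0 < min M' p := lt_min hM'0 hp0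
  have hdm'u : min M' p ≤ 3 * min M r := by
    calc min M' p ≤ min (3 * M) (3 * r) := min_le_min hM'u (by linarith)
      _ = 3 * min M r := (mul_min_of_nonneg _ _ (by norm_num)).symm
  have hdm'l : 3 / 4 * e * min M r ≤ min M' p := by
    calc 3 / 4 * e * min M r = min (3 / 4 * e * M) (3 / 4 * e * r) :=
          mul_min_of_nonneg _ _ (by positivity)
      _ ≤ min (e * M) (3 / 4 * r) := min_le_min (by nlinarith) (by nlinarith)
      _ ≤ min M' p := min_le_min hM'l hpl
  have key : ∀ x x' y y' : ℝ, 0 < x → 0 < x' → 0 < y → 0 < y' →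
      e * x ≤ x' → x' ≤ 3 * x → 3 / 4 * e * y ≤ y' → y' ≤ 3 * y →
      x' / y' ≤ 4 / e * (x / y) ∧ x / y ≤ 4 / e * (x' / y') := by
    intro x x' y y' hx hx' hy hy' h1 h2 h3 h4
    constructor
    · rw [div_mul_div_comm, div_le_div_iff₀ hy' (by positivity : (0:ℝ) < e * y)]
      nlinarith [mul_le_mul_of_nonneg_right h2 (by positivity : (0:ℝ) ≤ e * y),
        mul_le_mul_of_nonneg_left h3 (by positivity : (0:ℝ) ≤ 4 * x)]
    · rw [div_mul_div_comm, div_le_div_iff₀ hy (by positivity : (0:ℝ) < e * y')]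
      nlinarith [mul_le_mul_of_nonneg_left h4 (by positivity : (0:ℝ) ≤ x * e),
        mul_le_mul_of_nonneg_right h1 (by positivity : (0:ℝ) ≤ 4 * y)]
  obtain ⟨hw1, hv1⟩ := key m m' r p hm0 hm'0 hr hp0 hm'l hm'u (by nlinarith) (by linarith)
  obtain ⟨hw2, hv2⟩ := key M M' r p hM0 hM'0 hr hp0 hM'l hM'u (by nlinarith) (by linarith)
  obtain ⟨hw3, hv3⟩ := key m m' (min M r) (min M' p) hm0 hm'0 hdm0 hdm'0 hm'l hm'u hdm'l hdm'u
  have hv1p : 0 < m / r := by positivity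
  have hw1p : 0 < m' / p := by positivity
  have hv2p : 0 < M / r := by positivity
  have hw2p : 0 < M' / p := by positivity
  have hv3p : 0 < m / min M r := div_pos hm0 hdm0
  have hw3p : 0 < m' / min M' p := div_pos hm'0 hdm'0
  have hc1 : f (m / r) ≤ (Cf * (4 / e) ^ bf) * f (m' / p) :=
    pkgComp hfpos hf1 hCf hbf hfsc hlam hv1p hw1p hw1 hv1
  have hc2 : g (M / r) ≤ (Cg * (4 / e) ^ bg) * g (M' / p) :=
    pkgComp hgpos hg1 hCg hbg hgsc hlam hv2p hw2p hw2 hv2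
  have hc3 : h (m / min M r) ≤ (Ch * (4 / e) ^ bh) * h (m' / min M' p) :=
    pkgComp hhpos hh1 hCh hbh hhsc hlam hv3p hw3p hw3 hv3
  have p2 := hgpos _ hv2p
  have p3 := hhpos _ hv3p
  have step1 : f (m / r) * g (M / r) ≤
      ((Cf * (4 / e) ^ bf) * f (m' / p)) * ((Cg * (4 / e) ^ bg) * g (M' / p)) :=
    mul_le_mul hc1 hc2 p2.le (mul_nonneg (by positivity) (hfpos _ hw1p).le)
  have step2 : f (m / r) * g (M / r) * h (m / min M r) ≤
      (((Cf * (4 / e) ^ bf) * f (m' / p)) * ((Cg * (4 / e) ^ bg) * g (M' / p))) *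
        ((Ch * (4 / e) ^ bh) * h (m' / min M' p)) :=
    mul_le_mul step1 hc3 p3.le (mul_nonneg (mul_nonneg (by positivity) (hfpos _ hw1p).le)
      (mul_nonneg (by positivity) (hgpos _ hw2p).le))
  calc f (m / r) * g (M / r) * h (m / min M r) ≤ _ := step2
    _ = _ := by ring

lemma minmax_facts {e u s δ₁ δ₂ δ₃ : ℝ} (he0 : 0 < e) (he1 : e ≤ 1)
    (hs : 0 < s) (hu0 : 0 ≤ u) (hu2s : u ≤ 2 * s)
    (hδ₁ : 0 ≤ δ₁) (hδ₂ : 0 ≤ δ₂)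
    (hδ₃l : e * δ₁ ≤ δ₃) (hδ₃u : δ₃ ≤ δ₁ + u) :
    e * max (min δ₁ δ₂) s ≤ max (min δ₃ δ₂) s ∧
    max (min δ₃ δ₂) s ≤ 3 * max (min δ₁ δ₂) s ∧
    e * max (max δ₁ δ₂) s ≤ max (max δ₃ δ₂) s ∧
    max (max δ₃ δ₂) s ≤ 3 * max (max δ₁ δ₂) s := by
  have hδ₃0 : 0 ≤ δ₃ := le_trans (by positivity) hδ₃l
  have hmin_l : min (e * δ₁) (e * δ₂) ≤ min δ₃ δ₂ :=
    min_le_min hδ₃l (by nlinarith)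
  have hmax_l : max (e * δ₁) (e * δ₂) ≤ max δ₃ δ₂ :=
    max_le_max hδ₃l (by nlinarith)
  have hmin_u : min δ₃ δ₂ ≤ min δ₁ δ₂ + u := by
    calc min δ₃ δ₂ ≤ min (δ₁ + u) (δ₂ + u) := min_le_min hδ₃u (by linarith)
      _ = min δ₁ δ₂ + u := min_add_add_right _ _ _
  have hmax_u : max δ₃ δ₂ ≤ max δ₁ δ₂ + u := by
    calc max δ₃ δ₂ ≤ max (δ₁ + u) (δ₂ + u) := max_le_max hδ₃u (by linarith)
      _ = max δ₁ δ₂ + u := max_add_add_right _ _ _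
  refine ⟨?_, ?_, ?_, ?_⟩
  · rw [mul_max_of_nonneg _ _ he0.le, mul_min_of_nonneg _ _ he0.le]
    exact max_le_max hmin_l (by nlinarith)
  · apply max_le
    · exact le_trans hmin_u (by linarith [le_max_left (min δ₁ δ₂) s, le_max_right (min δ₁ δ₂) s])
    · linarith [le_max_right (min δ₁ δ₂) s]
  · rw [mul_max_of_nonneg _ _ he0.le, mul_max_of_nonneg _ _ he0.le]
    exact max_le_max hmax_l (by nlinarith)
  · apply max_le
    · exact le_trans hmax_u (by linarith [le_max_left (max δ₁ δ₂) s, le_max_right (max δ₁ δ₂) s])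
    · linarith [le_max_right (max δ₁ δ₂) s]


lemma dd_pos {d : ℕ} (hd : 2 ≤ d) {D : Set (EuclideanSpace ℝ (Fin d))} (hDopen : IsOpen D)
    (hDbdd : Bornology.IsBounded D) {x : EuclideanSpace ℝ (Fin d)} (hx : x ∈ D) :
    0 < dd D x := by
  haveI : Nonempty (Fin d) := ⟨⟨0, by omega⟩⟩
  have hne : (frontier D).Nonempty := by
    rw [nonempty_frontier_iff]
    refine ⟨⟨x, hx⟩, fun h => NormedSpace.unbounded_univ ℝ (EuclideanSpace ℝ (Fin d)) ?_⟩
    rw [← h]; exact hDbdd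
  have hxf : x ∉ frontier D := by
    rw [hDopen.frontier_eq]
    exact fun h => h.2 hx
  exact (isClosed_frontier.notMem_iff_infDist_pos hne).1 hxf

lemma afun_pos {d : ℕ} {α : ℝ} {D : Set (EuclideanSpace ℝ (Fin d))} {f g h : ℝ → ℝ}
    {t : ℝ} {x y : EuclideanSpace ℝ (Fin d)}
    (hfpos : ∀ v, 0 < v → 0 < f v) (hgpos : ∀ v, 0 < v → 0 < g v)
    (hhpos : ∀ v, 0 < v → 0 < h v)
    (ht : 0 < t ^ (1 / α)) (hxy : 0 < dist x y) :
    0 < Afun α D f g h t x y := by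
  have h1 : 0 ≤ dd D x := Metric.infDist_nonneg
  have h2 : 0 ≤ dd D y := Metric.infDist_nonneg
  have hm : 0 < max (min (dd D x) (dd D y)) (t ^ (1 / α)) :=
    lt_of_lt_of_le ht (le_max_right _ _)
  have hM : 0 < max (max (dd D x) (dd D y)) (t ^ (1 / α)) :=
    lt_of_lt_of_le ht (le_max_right _ _)
  have hmin : 0 < min (max (max (dd D x) (dd D y)) (t ^ (1 / α))) (dist x y) :=
    lt_min hM hxy
  exact mul_pos (mul_pos (hfpos _ (div_pos hm hxy)) (hgpos _ (div_pos hM hxy)))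
    (hhpos _ (div_pos hm hmin))

lemma nv_norm {d : ℕ} {D : Set (EuclideanSpace ℝ (Fin d))}
    {Q : EuclideanSpace ℝ (Fin d) → EuclideanSpace ℝ (Fin d)}
    {x : EuclideanSpace ℝ (Fin d)} (hQd : dist x (Q x) = dd D x) (hdd : 0 < dd D x) :
    ‖nv D Q x‖ = 1 := by
  rw [nv, norm_smul, norm_inv, Real.norm_eq_abs, abs_of_pos hdd, ← dist_eq_norm, hQd]
  exact inv_mul_cancel₀ hdd.ne'

lemma dist_shift {d : ℕ} {D : Set (EuclideanSpace ℝ (Fin d))}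
    {Q : EuclideanSpace ℝ (Fin d) → EuclideanSpace ℝ (Fin d)}
    {x : EuclideanSpace ℝ (Fin d)} (hn : ‖nv D Q x‖ = 1) {u : ℝ} (hu : 0 ≤ u) :
    dist x (x + u • nv D Q x) = u := by
  rw [dist_self_add_right, norm_smul, hn, Real.norm_eq_abs, abs_of_nonneg hu, mul_one]

lemma F_meas {d : ℕ} {α : ℝ} {D : Set (EuclideanSpace ℝ (Fin d))}
    {Q : EuclideanSpace ℝ (Fin d) → EuclideanSpace ℝ (Fin d)}
    {f g h : ℝ → ℝ} (hf : Measurable f) (hg : Measurable g) (hh : Measurable h)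
    (t : ℝ) (x y : EuclideanSpace ℝ (Fin d)) :
    Measurable (fun u : ℝ => Afun α D f g h t x (x + u • nv D Q x) *
      Afun α D f g h t (x + u • nv D Q x) y * u ^ (-α - 1)) := by
  have hz : Continuous fun u : ℝ => x + u • nv D Q x := by continuity
  have hdd : Measurable fun u : ℝ => dd D (x + u • nv D Q x) :=
    ((continuous_infDist_pt (frontier D)).comp hz).measurable
  have hd1 : Measurable fun u : ℝ => dist x (x + u • nv D Q x) :=
    (continuous_const.dist hz).measurable
  have hd2 : Measurable fun u : ℝ => dist (x + u • nv D Q x) y :=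
    (hz.dist continuous_const).measurable
  have hrp : Measurable fun u : ℝ => u ^ (-α - 1) := by measurability
  apply Measurable.mul _ hrp
  apply Measurable.mul
  · simp only [Afun]
    exact ((hf.comp (((measurable_const.min hdd).max measurable_const).div hd1)).mul
      (hg.comp (((measurable_const.max hdd).max measurable_const).div hd1))).mul
      (hh.comp (((measurable_const.min hdd).max measurable_const).div
        (((measurable_const.max hdd).max measurable_const).min hd1)))
  · simp only [Afun]
    exact ((hf.comp (((hdd.min measurable_const).max measurable_const).div hd2)).mul
      (hg.comp (((hdd.max measurable_const).max measurable_const).div hd2))).mul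
      (hh.comp (((hdd.min measurable_const).max measurable_const).div
        (((hdd.max measurable_const).max measurable_const).min hd2)))



lemma pkgUB2 {f : ℝ → ℝ} (hpos : ∀ v, 0 < v → 0 < f v) (h1 : ∀ v, 1 ≤ v → f v = 1)
    {C₀ b : ℝ} (hC₀ : 1 ≤ C₀) (hb : 0 ≤ b) (hsc : Pkg f C₀ b)
    {ε : ℝ} (hε0 : 0 < ε) (hε1 : ε ≤ 1) {v : ℝ} (hv : ε ≤ v) :
    f v ≤ C₀ * (1 / ε) ^ b := by
  have hεb : 1 ≤ (1 / ε) ^ b :=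
    Real.one_le_rpow (by rw [le_div_iff₀ hε0]; linarith) hb
  have hv0 : 0 < v := lt_of_lt_of_le hε0 hv
  rcases le_or_gt 1 v with hv1 | hv1
  · rw [h1 v hv1]; nlinarith
  · have h := (hsc v 1 hv0 hv1.le le_rfl).2
    have hf1 : f 1 = 1 := h1 1 le_rfl
    have hq : (1 / v) ^ b ≤ (1 / ε) ^ b :=
      Real.rpow_le_rpow (by positivity) (by
        rw [div_le_div_iff₀ hv0 hε0]; nlinarith) hb
    calc f v ≤ C₀ * (1 / v) ^ b * f 1 := h
      _ = C₀ * (1 / v) ^ b := by rw [hf1, mul_one]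
      _ ≤ C₀ * (1 / ε) ^ b := mul_le_mul_of_nonneg_left hq (by linarith)

lemma arg_ge {s N Dn R : ℝ} (hs : 0 < s) (hN : s ≤ N) (hD : 0 < Dn) (hDR : Dn ≤ R) :
    min (s / R) 2⁻¹ ≤ N / Dn :=
  le_trans (min_le_left _ _) (div_le_div₀ (by linarith) hN hD hDR)

lemma A_ub_core {f g h : ℝ → ℝ} {Cf bf Cg bg Ch bh : ℝ}
    (hfpos : ∀ v, 0 < v → 0 < f v) (hf1 : ∀ v, 1 ≤ v → f v = 1)
    (hCf : 1 ≤ Cf) (hbf : 0 ≤ bf) (hfsc : Pkg f Cf bf)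
    (hgpos : ∀ v, 0 < v → 0 < g v) (hg1 : ∀ v, 1 ≤ v → g v = 1)
    (hCg : 1 ≤ Cg) (hbg : 0 ≤ bg) (hgsc : Pkg g Cg bg)
    (hhpos : ∀ v, 0 < v → 0 < h v) (hh1 : ∀ v, 1 ≤ v → h v = 1)
    (hCh : 1 ≤ Ch) (hbh : 0 ≤ bh) (hhsc : Pkg h Ch bh)
    {ε a₁ a₂ a₃ : ℝ} (hε0 : 0 < ε) (hε1 : ε ≤ 1)
    (h₁ : ε ≤ a₁) (h₂ : ε ≤ a₂) (h₃ : ε ≤ a₃) :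
    f a₁ * g a₂ * h a₃ ≤
      (Cf * (1 / ε) ^ bf) * (Cg * (1 / ε) ^ bg) * (Ch * (1 / ε) ^ bh) := by
  have e1 := pkgUB2 hfpos hf1 hCf hbf hfsc hε0 hε1 h₁
  have e2 := pkgUB2 hgpos hg1 hCg hbg hgsc hε0 hε1 h₂
  have e3 := pkgUB2 hhpos hh1 hCh hbh hhsc hε0 hε1 h₃
  have p1 := hfpos _ (lt_of_lt_of_le hε0 h₁)
  have p2 := hgpos _ (lt_of_lt_of_le hε0 h₂)
  have p3 := hhpos _ (lt_of_lt_of_le hε0 h₃)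
  have hεb1 : (0:ℝ) < (1 / ε) ^ bf := Real.rpow_pos_of_pos (by positivity) _
  have hεb2 : (0:ℝ) < (1 / ε) ^ bg := Real.rpow_pos_of_pos (by positivity) _
  have step1 : f a₁ * g a₂ ≤ (Cf * (1 / ε) ^ bf) * (Cg * (1 / ε) ^ bg) :=
    mul_le_mul e1 e2 p2.le (by nlinarith)
  exact mul_le_mul step1 e3 p3.le (by nlinarith)

end St4Aux

/-- Lemma 3.2(ii): the two-jump integral dominates `A_{Φ₁,Φ₂,ℓ}`. -/
theorem statement_4
    (d : ℕ) (hd : 2 ≤ d)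
    (D : Set (EuclideanSpace ℝ (Fin d))) (hDopen : IsOpen D)
    (hDbdd : Bornology.IsBounded D)
    (Q : EuclideanSpace ℝ (Fin d) → EuclideanSpace ℝ (Fin d))
    (hQ : ∀ x ∈ D, Q x ∈ frontier D ∧ dist x (Q x) = dd D x)
    (η₁ η₂ : ℝ) (hη₁0 : 0 < η₁) (hη₁1 : η₁ ≤ 1) (hη₂0 : 0 < η₂) (hη₂1 : η₂ < 1)
    (hlift : ∀ x ∈ D, ∀ r : ℝ, 0 < r → r ≤ η₁ →
      η₂ * (dd D x + r) ≤ dd D (x + r • nv D Q x) ∧ dd D (x + r • nv D Q x) ≤ dd D x + r)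
    (ε₁ : ℝ) (hε₁ : ε₁ = min (1 / 4 : ℝ) (η₁ / Metric.diam D))
    (α β₁ β₁s β₂ β₂s : ℝ) (hα0 : 0 < α) (hα2 : α < 2)
    (hβ₁ : 0 ≤ β₁) (hβ₁s : β₁ ≤ β₁s) (hβ₂ : 0 ≤ β₂) (hβ₂s : β₂ ≤ β₂s)
    (Φ₁ Φ₂ l : ℝ → ℝ)
    (hΦ₁ : StdFun Φ₁) (hΦ₁inc : AlmostIncreasingOn01 Φ₁)
    (hΦ₁low : LowerIndexIs Φ₁ β₁) (hΦ₁up : UpperIndexIs Φ₁ β₁s)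
    (hΦ₂ : StdFun Φ₂) (hΦ₂inc : AlmostIncreasingOn01 Φ₂)
    (hΦ₂low : LowerIndexIs Φ₂ β₂) (hΦ₂up : UpperIndexIs Φ₂ β₂s)
    (hl : StdFun l) (hlscale : EllScaling l β₁ β₂)
    (Φ₀ : ℝ → ℝ) (hΦ₀def : ∀ r : ℝ, Φ₀ r = Φ₁ r * l r)
    :
    ∃ C : ℝ, 0 < C ∧ ∀ t : ℝ, 0 < t → ∀ x ∈ D, ∀ y ∈ D, x ≠ y →
      C * Afun α D Φ₁ Φ₂ l t x y ≤
        min t (dist x y ^ α) *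
          Iint α D Q Φ₁ Φ₂ l
            (min (t ^ (1 / α)) (ε₁ * dist x y / 2))
            (ε₁ * dist x y) t x y := by
  classical
  -- function facts
  obtain ⟨hΦ₁meas, hΦ₁pos, hΦ₁one⟩ := hΦ₁
  obtain ⟨hΦ₂meas, hΦ₂pos, hΦ₂one⟩ := hΦ₂
  obtain ⟨hlmeas, hlpos, hlone⟩ := hl
  -- scaling packages
  have hb₁ : (0:ℝ) ≤ β₁s + 1 := by linarith
  have hb₂ : (0:ℝ) ≤ β₂s + 1 := by linarith
  obtain ⟨C₁, hC₁1, hP₁⟩ := St4Aux.pkg_of_std hΦ₁pos hΦ₁inc hb₁ (hΦ₁up.1 (β₁s + 1) (by linarith))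
  obtain ⟨C₂, hC₂1, hP₂⟩ := St4Aux.pkg_of_std hΦ₂pos hΦ₂inc hb₂ (hΦ₂up.1 (β₂s + 1) (by linarith))
  obtain ⟨C₃, hC₃1, hC₃sc⟩ := hlscale 1 one_pos
  have hP₃ : St4Aux.Pkg l C₃ 1 := St4Aux.pkg_of_ell hlpos hC₃1 hC₃sc hβ₁ hβ₂
  have hb₃ : (0:ℝ) ≤ (1:ℝ) := zero_le_one
  -- constants
  set b₁ : ℝ := β₁s + 1 with hb₁def
  set b₂ : ℝ := β₂s + 1 with hb₂def
  have h2b₁ : (0:ℝ) < 2 ^ b₁ := Real.rpow_pos_of_pos two_pos _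
  have h2b₂ : (0:ℝ) < 2 ^ b₂ := Real.rpow_pos_of_pos two_pos _
  have h2b₃ : (0:ℝ) < 2 ^ (1:ℝ) := Real.rpow_pos_of_pos two_pos _
  have hη : (0:ℝ) < 4 / η₂ := by positivity
  have hlb₁ : (0:ℝ) < (4 / η₂) ^ b₁ := Real.rpow_pos_of_pos hη _
  have hlb₂ : (0:ℝ) < (4 / η₂) ^ b₂ := Real.rpow_pos_of_pos hη _
  have hlb₃ : (0:ℝ) < (4 / η₂) ^ (1:ℝ) := Real.rpow_pos_of_pos hη _
  set cc₁ : ℝ := (C₁ * 2 ^ b₁) * (C₂ * 2 ^ b₂) * (C₃ * 2 ^ (1:ℝ)) with hcc₁def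
  set cc₂ : ℝ := (C₁ * (4 / η₂) ^ b₁) * (C₂ * (4 / η₂) ^ b₂) * (C₃ * (4 / η₂) ^ (1:ℝ))
    with hcc₂def
  have hcc₁pos : 0 < cc₁ := by
    apply mul_pos (mul_pos (mul_pos (by linarith) h2b₁) (mul_pos (by linarith) h2b₂))
      (mul_pos (by linarith) h2b₃)
  have hcc₂pos : 0 < cc₂ := by
    apply mul_pos (mul_pos (mul_pos (by linarith) hlb₁) (mul_pos (by linarith) hlb₂))
      (mul_pos (by linarith) hlb₃)
  have h2a0 : (0:ℝ) < 2 ^ (-α - 1) := Real.rpow_pos_of_pos two_pos _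
  refine ⟨2 ^ (-α - 1) * (cc₁⁻¹ * cc₂⁻¹), by positivity, ?_⟩
  intro t ht x hx y hy hxy
  -- basic geometric quantities
  have hr : 0 < dist x y := dist_pos.2 hxy
  have hs : 0 < t ^ (1 / α) := Real.rpow_pos_of_pos ht _
  have hδx : 0 < dd D x := St4Aux.dd_pos hd hDopen hDbdd hx
  have hδy : 0 < dd D y := St4Aux.dd_pos hd hDopen hDbdd hy
  obtain ⟨hQfr, hQd⟩ := hQ x hx
  have hn : ‖nv D Q x‖ = 1 := St4Aux.nv_norm hQd hδx
  have hrdiam : dist x y ≤ Metric.diam D := Metric.dist_le_diam_of_mem hDbdd hx hy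
  have hdiam : 0 < Metric.diam D := lt_of_lt_of_le hr hrdiam
  have hε₁0 : 0 < ε₁ := by
    rw [hε₁]; exact lt_min (by norm_num) (by positivity)
  have hε₁4 : ε₁ ≤ 1 / 4 := by rw [hε₁]; exact min_le_left _ _
  have hbη : ε₁ * dist x y ≤ η₁ := by
    calc ε₁ * dist x y ≤ (η₁ / Metric.diam D) * Metric.diam D := by
          apply mul_le_mul (by rw [hε₁]; exact min_le_right _ _) hrdiam hr.le (by positivity)
      _ = η₁ := div_mul_cancel₀ _ hdiam.ne'
  set s : ℝ := t ^ (1 / α) with hsdef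
  set r : ℝ := dist x y with hrdef
  set a : ℝ := min s (ε₁ * r / 2) with hadef
  set b : ℝ := ε₁ * r with hbdef
  have ha0 : 0 < a := lt_min hs (by positivity)
  have has : a ≤ s := min_le_left _ _
  have hab2 : a ≤ ε₁ * r / 2 := min_le_right _ _
  have h2ab : 2 * a ≤ b := by rw [hbdef]; linarith
  have hbr : b ≤ r / 4 := by
    have h5 : ε₁ * r ≤ 1 / 4 * r := mul_le_mul_of_nonneg_right hε₁4 hr.le
    rw [hbdef]; linarith only [h5]
  -- the integrand
  set F : ℝ → ℝ := fun u => Afun α D Φ₁ Φ₂ l t x (x + u • nv D Q x) *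
    Afun α D Φ₁ Φ₂ l t (x + u • nv D Q x) y * u ^ (-α - 1) with hFdef
  set A : ℝ := Afun α D Φ₁ Φ₂ l t x y with hAdef
  have hApos : 0 < A := St4Aux.afun_pos hΦ₁pos hΦ₂pos hlpos hs hr
  set K : ℝ := cc₁⁻¹ * (cc₂⁻¹ * A) * (2 * a) ^ (-α - 1) with hKdef
  have hKpos : 0 < K := by
    apply mul_pos (mul_pos (by positivity) (by positivity)) (Real.rpow_pos_of_pos (by linarith) _)
  -- pointwise facts valid on all of Ioo a b
  have hgeo : ∀ u : ℝ, u ∈ Set.Ioo a b → 0 < u ∧ dist x (x + u • nv D Q x) = u ∧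
      η₂ * (dd D x + u) ≤ dd D (x + u • nv D Q x) ∧ dd D (x + u • nv D Q x) ≤ dd D x + u ∧
      r - u ≤ dist (x + u • nv D Q x) y ∧ dist (x + u • nv D Q x) y ≤ r + u ∧ u ≤ b := by
    intro u hu
    have hu0 : 0 < u := lt_trans ha0 hu.1
    have hub : u ≤ b := hu.2.le
    have hdz : dist x (x + u • nv D Q x) = u := St4Aux.dist_shift hn hu0.le
    obtain ⟨hl1, hl2⟩ := hlift x hx u hu0 (le_trans hub hbη)
    refine ⟨hu0, hdz, hl1, hl2, ?_, ?_, hub⟩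
    · have := dist_triangle x (x + u • nv D Q x) y
      rw [hdz] at this; rw [hrdef]; linarith
    · have := dist_triangle (x + u • nv D Q x) x y
      rw [dist_comm (x + u • nv D Q x) x, hdz] at this; rw [hrdef]; linarith
  -- pointwise lower bound on the window
  have key : ∀ u : ℝ, u ∈ Set.Ioo a (2 * a) → K ≤ F u := by
    intro u hu
    have huIab : u ∈ Set.Ioo a b := ⟨hu.1, lt_of_lt_of_le hu.2 h2ab⟩
    obtain ⟨hu0, hdz, hδzl, hδzu, hρl', hρu', hub⟩ := hgeo u huIab
    have hu2s : u ≤ 2 * s := by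
      have h5 := hu.2.le
      linarith only [h5, has]
    set z := x + u • nv D Q x with hzdef
    have hδz0 : 0 ≤ dd D z := Metric.infDist_nonneg
    have hur4 : u ≤ r / 4 := le_trans hub hbr
    have hρ0 : 0 < dist z y := by linarith only [hρl', hur4, hr]
    have hρl : 3 / 4 * r ≤ dist z y := by linarith only [hρl', hur4]
    have hρu : dist z y ≤ 5 / 4 * r := by linarith only [hρu', hur4]
    -- lower bound for the first factor
    have hA1 : cc₁⁻¹ ≤ Afun α D Φ₁ Φ₂ l t x z := by
      have h := St4Aux.A_lower hΦ₁pos hΦ₁one hC₁1 hb₁ hP₁ hΦ₂pos hΦ₂one hC₂1 hb₂ hP₂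
        hlpos hlone hC₃1 hb₃ hP₃ hs hu0 hu2s (Metric.infDist_nonneg : 0 ≤ dd D x)
        (Metric.infDist_nonneg : 0 ≤ dd D z)
      rw [hcc₁def]
      simp only [Afun]
      rw [hdz]
      exact h
    -- comparability of the second factor with A
    have hδzl2 : η₂ * dd D x ≤ dd D z :=
      le_trans (mul_le_mul_of_nonneg_left (by linarith only [hu0] : dd D x ≤ dd D x + u)
        hη₂0.le) hδzl
    obtain ⟨k1, k2, k3, k4⟩ := St4Aux.minmax_facts hη₂0 hη₂1.le hs hu0.le hu2s
      hδx.le hδy.le hδzl2 hδzu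
    have hA2 : A ≤ cc₂ * Afun α D Φ₁ Φ₂ l t z y := by
      rw [hAdef, hcc₂def]
      simp only [Afun]
      exact St4Aux.A_comp_core hΦ₁pos hΦ₁one hC₁1 hb₁ hP₁ hΦ₂pos hΦ₂one hC₂1 hb₂ hP₂
        hlpos hlone hC₃1 hb₃ hP₃ hη₂0 hη₂1.le
        (lt_of_lt_of_le hs (le_max_right _ _)) (lt_of_lt_of_le hs (le_max_right _ _))
        (lt_of_lt_of_le hs (le_max_right _ _)) (lt_of_lt_of_le hs (le_max_right _ _))
        hr hρ0 k1 k2 k3 k4 hρl hρu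
    have hA2' : cc₂⁻¹ * A ≤ Afun α D Φ₁ Φ₂ l t z y := by
      rw [inv_mul_le_iff₀ hcc₂pos]; exact hA2
    have hz3 : (2 * a) ^ (-α - 1) ≤ u ^ (-α - 1) :=
      Real.rpow_le_rpow_of_nonpos hu0 hu.2.le (by linarith)
    have hA1pos : 0 < Afun α D Φ₁ Φ₂ l t x z := by
      apply St4Aux.afun_pos hΦ₁pos hΦ₂pos hlpos hs; rw [hdz]; exact hu0
    have hA2pos : 0 < Afun α D Φ₁ Φ₂ l t z y :=
      St4Aux.afun_pos hΦ₁pos hΦ₂pos hlpos hs hρ0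
    have step1 : cc₁⁻¹ * (cc₂⁻¹ * A) ≤
        Afun α D Φ₁ Φ₂ l t x z * Afun α D Φ₁ Φ₂ l t z y :=
      mul_le_mul hA1 hA2' (by positivity) hA1pos.le
    rw [hKdef, hFdef]
    exact mul_le_mul step1 hz3 (Real.rpow_pos_of_pos (by linarith) _).le
      (by positivity)
  -- upper bound for integrability
  set ε' : ℝ := min (s / (r + b)) 2⁻¹ with hε'def
  have hε'0 : 0 < ε' := lt_min (by positivity) (by norm_num)
  have hε'1 : ε' ≤ 1 := le_trans (min_le_right _ _) (by norm_num)
  set B : ℝ := (C₁ * (1 / ε') ^ b₁) * (C₂ * (1 / ε') ^ b₂) * (C₃ * (1 / ε') ^ (1:ℝ)) with hBdef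
  have hBpos : 0 < B := by
    have i1 : (0:ℝ) < (1 / ε') ^ b₁ := Real.rpow_pos_of_pos (by positivity) _
    have i2 : (0:ℝ) < (1 / ε') ^ b₂ := Real.rpow_pos_of_pos (by positivity) _
    have i3 : (0:ℝ) < (1 / ε') ^ (1:ℝ) := Real.rpow_pos_of_pos (by positivity) _
    apply mul_pos (mul_pos (mul_pos (by linarith) i1) (mul_pos (by linarith) i2))
      (mul_pos (by linarith) i3)
  have hFub : ∀ u : ℝ, u ∈ Set.Ioo a b → F u ≤ B * B * a ^ (-α - 1) := by
    intro u hu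
    obtain ⟨hu0, hdz, hδzl, hδzu, hρl', hρu', hub⟩ := hgeo u hu
    set z := x + u • nv D Q x with hzdef
    have hur4 : u ≤ r / 4 := le_trans hub hbr
    have hρ0 : 0 < dist z y := by linarith only [hρl', hur4, hr]
    have hρR : dist z y ≤ r + b := by linarith only [hρu', hub]
    have huR : u ≤ r + b := by linarith only [hub, hr]
    have hA1ub : Afun α D Φ₁ Φ₂ l t x z ≤ B := by
      rw [hBdef]; simp only [Afun]; rw [hdz]
      apply St4Aux.A_ub_core hΦ₁pos hΦ₁one hC₁1 hb₁ hP₁ hΦ₂pos hΦ₂one hC₂1 hb₂ hP₂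
        hlpos hlone hC₃1 hb₃ hP₃ hε'0 hε'1
      · exact St4Aux.arg_ge hs (le_max_right _ _) hu0 huR
      · exact St4Aux.arg_ge hs (le_max_right _ _) hu0 huR
      · exact St4Aux.arg_ge hs (le_max_right _ _)
          (lt_min (lt_of_lt_of_le hs (le_max_right _ _)) hu0)
          (le_trans (min_le_right _ _) huR)
    have hA2ub : Afun α D Φ₁ Φ₂ l t z y ≤ B := by
      rw [hBdef]; simp only [Afun]
      apply St4Aux.A_ub_core hΦ₁pos hΦ₁one hC₁1 hb₁ hP₁ hΦ₂pos hΦ₂one hC₂1 hb₂ hP₂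
        hlpos hlone hC₃1 hb₃ hP₃ hε'0 hε'1
      · exact St4Aux.arg_ge hs (le_max_right _ _) hρ0 hρR
      · exact St4Aux.arg_ge hs (le_max_right _ _) hρ0 hρR
      · exact St4Aux.arg_ge hs (le_max_right _ _)
          (lt_min (lt_of_lt_of_le hs (le_max_right _ _)) hρ0)
          (le_trans (min_le_right _ _) hρR)
    have hup : u ^ (-α - 1) ≤ a ^ (-α - 1) :=
      Real.rpow_le_rpow_of_nonpos ha0 hu.1.le (by linarith)
    have hA1pos : 0 < Afun α D Φ₁ Φ₂ l t x z := by
      apply St4Aux.afun_pos hΦ₁pos hΦ₂pos hlpos hs; rw [hdz]; exact hu0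
    have hA2pos : 0 < Afun α D Φ₁ Φ₂ l t z y :=
      St4Aux.afun_pos hΦ₁pos hΦ₂pos hlpos hs hρ0
    have step1 : Afun α D Φ₁ Φ₂ l t x z * Afun α D Φ₁ Φ₂ l t z y ≤ B * B :=
      mul_le_mul hA1ub hA2ub hA2pos.le (by positivity)
    rw [hFdef]
    exact mul_le_mul step1 hup (Real.rpow_pos_of_pos hu0 _).le (by positivity)
  have hF0 : ∀ u : ℝ, u ∈ Set.Ioo a b → 0 ≤ F u := by
    intro u hu
    obtain ⟨hu0, hdz, hδzl, hδzu, hρl', hρu', hub⟩ := hgeo u hu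
    have hur4 : u ≤ r / 4 := le_trans hub hbr
    have hρ0 : 0 < dist (x + u • nv D Q x) y := by linarith only [hρl', hur4, hr]
    have hA1pos : 0 < Afun α D Φ₁ Φ₂ l t x (x + u • nv D Q x) := by
      apply St4Aux.afun_pos hΦ₁pos hΦ₂pos hlpos hs; rw [hdz]; exact hu0
    have hA2pos : 0 < Afun α D Φ₁ Φ₂ l t (x + u • nv D Q x) y :=
      St4Aux.afun_pos hΦ₁pos hΦ₂pos hlpos hs hρ0
    have : 0 < u ^ (-α - 1) := Real.rpow_pos_of_pos hu0 _
    rw [hFdef]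
    positivity
  -- integrability
  have hFmeas : Measurable F := St4Aux.F_meas hΦ₁meas hΦ₂meas hlmeas t x y
  have hFint : IntegrableOn F (Set.Ioo a b) := by
    apply Integrable.mono' (g := fun _ => B * B * a ^ (-α - 1))
      (integrableOn_const measure_Ioo_lt_top.ne)
      (hFmeas.aestronglyMeasurable.restrict)
    rw [ae_restrict_iff' measurableSet_Ioo]
    filter_upwards with u hu
    rw [Real.norm_eq_abs, abs_of_nonneg (hF0 u hu)]
    exact hFub u hu
  set G : ℝ → ℝ := (Set.Ioo a (2 * a)).indicator (fun _ => K) with hGdef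
  have hGint : IntegrableOn G (Set.Ioo a b) :=
    (integrableOn_const measure_Ioo_lt_top.ne).indicator measurableSet_Ioo
  have hmono : ∀ u ∈ Set.Ioo a b, G u ≤ F u := by
    intro u hu
    rw [hGdef]
    by_cases h2 : u ∈ Set.Ioo a (2 * a)
    · rw [Set.indicator_of_mem h2]; exact key u h2
    · rw [Set.indicator_of_notMem h2]; exact hF0 u hu
  have hIle : ∫ u in Set.Ioo a b, G u ≤ ∫ u in Set.Ioo a b, F u :=
    setIntegral_mono_on hGint hFint measurableSet_Ioo hmono
  have hGval : ∫ u in Set.Ioo a b, G u = a * K := by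
    rw [hGdef, setIntegral_indicator measurableSet_Ioo,
      Set.inter_eq_self_of_subset_right (Set.Ioo_subset_Ioo_right h2ab),
      setIntegral_const, Real.volume_real_Ioo_of_le (by linarith only [ha0]), smul_eq_mul]
    ring
  have hIlb : a * K ≤ ∫ u in Set.Ioo a b, F u := by rw [← hGval]; exact hIle
  -- final assembly
  have hIintval : Iint α D Q Φ₁ Φ₂ l a b t x y = ∫ u in Set.Ioo a b, F u := rfl
  have hminpos : 0 < min t (r ^ α) := lt_min ht (Real.rpow_pos_of_pos hr _)
  have hstep : min t (r ^ α) * (a * K) ≤ min t (r ^ α) * Iint α D Q Φ₁ Φ₂ l a b t x y := by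
    rw [hIintval]
    exact mul_le_mul_of_nonneg_left hIlb hminpos.le
  have haα : a ^ α ≤ min t (r ^ α) := by
    apply le_min
    · have h1 : a ^ α ≤ s ^ α := Real.rpow_le_rpow ha0.le has hα0.le
      have h2 : s ^ α = t := by
        rw [hsdef, ← Real.rpow_mul ht.le, one_div_mul_cancel hα0.ne', Real.rpow_one]
      linarith only [h1, h2]
    · apply Real.rpow_le_rpow ha0.le _ hα0.le
      have h5 : ε₁ * r ≤ 1 / 4 * r := mul_le_mul_of_nonneg_right hε₁4 hr.le
      linarith only [h5, hab2, hr]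
  have hL1 : a * a ^ (-α - 1) = a ^ (-α) := by
    rw [show (-α - 1 : ℝ) = (-α) + (-1) by ring, Real.rpow_add ha0, Real.rpow_neg_one]
    field_simp
  have hL2 : (1:ℝ) ≤ min t (r ^ α) * a ^ (-α) := by
    rw [Real.rpow_neg ha0.le]
    have h1 : a ^ α * (a ^ α)⁻¹ ≤ min t (r ^ α) * (a ^ α)⁻¹ :=
      mul_le_mul_of_nonneg_right haα (by positivity)
    rw [mul_inv_cancel₀ (Real.rpow_pos_of_pos ha0 α).ne'] at h1
    exact h1
  have hL3 : (2 * a) ^ (-α - 1 : ℝ) = 2 ^ (-α - 1 : ℝ) * a ^ (-α - 1 : ℝ) :=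
    Real.mul_rpow two_pos.le ha0.le
  have hfinal : 2 ^ (-α - 1) * (cc₁⁻¹ * cc₂⁻¹) * A ≤ min t (r ^ α) * (a * K) := by
    have e1 : min t (r ^ α) * (a * K) =
        (min t (r ^ α) * (a * a ^ (-α - 1))) * (2 ^ (-α - 1) * (cc₁⁻¹ * cc₂⁻¹ * A)) := by
      rw [hKdef, hL3]; ring
    rw [e1, hL1]
    have e2 : (1:ℝ) * (2 ^ (-α - 1) * (cc₁⁻¹ * cc₂⁻¹ * A)) ≤
        (min t (r ^ α) * a ^ (-α)) * (2 ^ (-α - 1) * (cc₁⁻¹ * cc₂⁻¹ * A)) :=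
      mul_le_mul_of_nonneg_right hL2 (by positivity)
    rw [one_mul] at e2
    calc 2 ^ (-α - 1) * (cc₁⁻¹ * cc₂⁻¹) * A
        = 2 ^ (-α - 1) * (cc₁⁻¹ * cc₂⁻¹ * A) := by ring
      _ ≤ _ := e2
  calc 2 ^ (-α - 1) * (cc₁⁻¹ * cc₂⁻¹) * A ≤ min t (r ^ α) * (a * K) := hfinal
    _ ≤ min t (r ^ α) * Iint α D Q Φ₁ Φ₂ l a b t x y := hstep
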